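/- Suppose Z_i = Γ_{θ*} + ε_i for i = 1,…,n, where θ* ∈ ℝ^p and ε₁,…,ε_n are symmetric d×d matrices, and suppose max_{1 ≤ j ≤ p} ‖B_j‖_F ≤ M₁. Let θ̂ be a minimizer of ℓ^λ and set Σ̂ = Γ_{θ̂}, Σ = Γ_{θ*}. Then ‖Σ̂ − Σ‖_F² ≤ (2 u_p M₁ / n) ‖Σ_{i=1}^n ε_i‖₂ |θ* − θ̂|₁ + (2λ/n)( |θ*|₁ − |θ̂|₁ ), where u_p = max_{1 ≤ j ≤ p} √(rank(B_j)) and |·|₁ is the ℓ₁ norm on ℝ^p. -/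

import Mathlib

open Matrix MeasureTheory ProbabilityTheory Finset

noncomputable section

/-- Frobenius inner product `⟨A,B⟩ = tr(Aᵀ B)`. -/
def frobInner {d : ℕ} (A B : Matrix (Fin d) (Fin d) ℝ) : ℝ := Matrix.trace (Aᵀ * B)

/-- Frobenius norm `‖A‖_F = √⟨A,A⟩`. -/
def frobNorm {d : ℕ} (A : Matrix (Fin d) (Fin d) ℝ) : ℝ := Real.sqrt (frobInner A A)

/-- Spectral (operator) norm of a matrix, as the operator norm of the induced
linear map on Euclidean space. -/
def specNorm {d : ℕ} (A : Matrix (Fin d) (Fin d) ℝ) : ℝ :=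
  ‖LinearMap.toContinuousLinearMap (Matrix.toEuclideanLin A)‖

/-- Loewner order: `A ⪯ B` iff `B - A` is positive semidefinite. -/
def loewnerLE {d : ℕ} (A B : Matrix (Fin d) (Fin d) ℝ) : Prop := (B - A).PosSemidef

/-- Entrywise expectation of a random matrix. -/
def matExp {Ω : Type*} [MeasurableSpace Ω] (μ : Measure Ω) {d : ℕ}
    (X : Ω → Matrix (Fin d) (Fin d) ℝ) : Matrix (Fin d) (Fin d) ℝ :=
  Matrix.of fun a c => ∫ ω, X ω a c ∂μ

/-- Linear predictor `Γ_θ = ∑ⱼ θⱼ Bⱼ`. -/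
def Gamma {d p : ℕ} (B : Fin p → Matrix (Fin d) (Fin d) ℝ) (θ : Fin p → ℝ) :
    Matrix (Fin d) (Fin d) ℝ := ∑ j, θ j • B j

/-- Empirical risk `ℓ(θ) = ∑ᵢ ‖Zᵢ - Γ_θ‖_F²`. -/
def empRisk {d p n : ℕ} (B : Fin p → Matrix (Fin d) (Fin d) ℝ)
    (Z : Fin n → Matrix (Fin d) (Fin d) ℝ) (θ : Fin p → ℝ) : ℝ :=
  ∑ i, (frobNorm (Z i - Gamma B θ)) ^ 2

/-- Penalized objective `ℓ^λ(θ) = ℓ(θ) + 2λ ∑ⱼ |θⱼ|`. -/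
def objective {d p n : ℕ} (B : Fin p → Matrix (Fin d) (Fin d) ℝ)
    (Z : Fin n → Matrix (Fin d) (Fin d) ℝ) (lam : ℝ) (θ : Fin p → ℝ) : ℝ :=
  empRisk B Z θ + 2 * lam * ∑ j, |θ j|

/-- Soft-thresholding operator `ST`. -/
def softThresh (a lam : ℝ) : ℝ := if lam < a then a - lam else if a < -lam then a + lam else 0

/-- Measurable space structure on matrices (entrywise, via the Pi structure). -/
instance matrixMeasurableSpace {d : ℕ} : MeasurableSpace (Matrix (Fin d) (Fin d) ℝ) :=
  (inferInstance : MeasurableSpace (Fin d → Fin d → ℝ))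

/-! ### Auxiliary lemmas -/

lemma frobInner_eq_sum {d : ℕ} (A B : Matrix (Fin d) (Fin d) ℝ) :
    frobInner A B = ∑ i, ∑ j, A i j * B i j := by
  rw [frobInner, Matrix.trace]
  simp [Matrix.diag, Matrix.mul_apply, Matrix.transpose_apply]
  rw [Finset.sum_comm]

lemma frobInner_comm {d : ℕ} (A B : Matrix (Fin d) (Fin d) ℝ) :
    frobInner A B = frobInner B A := by
  simp [frobInner_eq_sum, mul_comm]

lemma frobInner_self_nonneg {d : ℕ} (A : Matrix (Fin d) (Fin d) ℝ) :
    0 ≤ frobInner A A := by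
  rw [frobInner_eq_sum]
  exact Finset.sum_nonneg fun i _ => Finset.sum_nonneg fun j _ => mul_self_nonneg _

lemma frobNorm_sq {d : ℕ} (A : Matrix (Fin d) (Fin d) ℝ) :
    frobNorm A ^ 2 = frobInner A A := Real.sq_sqrt (frobInner_self_nonneg A)

lemma frobNorm_nonneg {d : ℕ} (A : Matrix (Fin d) (Fin d) ℝ) :
    0 ≤ frobNorm A := Real.sqrt_nonneg _

lemma frobInner_add_right {d : ℕ} (A X Y : Matrix (Fin d) (Fin d) ℝ) :
    frobInner A (X + Y) = frobInner A X + frobInner A Y := by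
  simp [frobInner_eq_sum, mul_add, Finset.sum_add_distrib]

lemma frobInner_sub_right {d : ℕ} (A X Y : Matrix (Fin d) (Fin d) ℝ) :
    frobInner A (X - Y) = frobInner A X - frobInner A Y := by
  simp [frobInner_eq_sum, mul_sub, Finset.sum_sub_distrib]

lemma frobInner_sub_left {d : ℕ} (A X Y : Matrix (Fin d) (Fin d) ℝ) :
    frobInner (A - X) Y = frobInner A Y - frobInner X Y := by
  simp [frobInner_eq_sum, sub_mul, Finset.sum_sub_distrib]

lemma frobInner_smul_right {d : ℕ} (A X : Matrix (Fin d) (Fin d) ℝ) (r : ℝ) :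
    frobInner A (r • X) = r * frobInner A X := by
  simp [frobInner_eq_sum, Finset.mul_sum, mul_left_comm]

lemma frobInner_sum_right {d : ℕ} {ι : Type*} (t : Finset ι)
    (A : Matrix (Fin d) (Fin d) ℝ) (f : ι → Matrix (Fin d) (Fin d) ℝ) :
    frobInner A (∑ i ∈ t, f i) = ∑ i ∈ t, frobInner A (f i) := by
  classical
  induction t using Finset.induction with
  | empty => simp [frobInner_eq_sum]
  | insert _ _ h ih => rw [Finset.sum_insert h, Finset.sum_insert h, frobInner_add_right, ih]

lemma frobInner_sum_left {d : ℕ} {ι : Type*} (t : Finset ι)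
    (A : Matrix (Fin d) (Fin d) ℝ) (f : ι → Matrix (Fin d) (Fin d) ℝ) :
    frobInner (∑ i ∈ t, f i) A = ∑ i ∈ t, frobInner (f i) A := by
  rw [frobInner_comm, frobInner_sum_right]
  exact Finset.sum_congr rfl fun i _ => frobInner_comm _ _

lemma specNorm_nonneg {d : ℕ} (A : Matrix (Fin d) (Fin d) ℝ) : 0 ≤ specNorm A :=
  norm_nonneg _

lemma quad_le {d : ℕ} (E : Matrix (Fin d) (Fin d) ℝ) (x : Fin d → ℝ) :
    |x ⬝ᵥ (E *ᵥ x)| ≤ specNorm E * ((∑ i, x i ^2)) := by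
  set x' : EuclideanSpace ℝ (Fin d) := (WithLp.equiv 2 (Fin d → ℝ)).symm x with hx'
  have h1 : x ⬝ᵥ (E *ᵥ x) = inner ℝ x' (LinearMap.toContinuousLinearMap (Matrix.toEuclideanLin E) x') := by
    rw [LinearMap.coe_toContinuousLinearMap']
    rw [hx', WithLp.equiv_symm_apply, Matrix.toEuclideanLin_apply_piLp_toLp]
    simp [hx', PiLp.inner_apply, RCLike.inner_apply, dotProduct, WithLp.equiv_symm_apply,
      mul_comm]
  have h2 : ‖x'‖^2 = ∑ i, x i ^ 2 := by
    rw [EuclideanSpace.norm_eq, Real.sq_sqrt (by positivity)]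
    simp [hx', WithLp.equiv_symm_apply, sq_abs]
  rw [h1, ← h2]
  calc |inner ℝ x' (LinearMap.toContinuousLinearMap (Matrix.toEuclideanLin E) x')|
      ≤ ‖x'‖ * ‖LinearMap.toContinuousLinearMap (Matrix.toEuclideanLin E) x'‖ := by
        rw [← Real.norm_eq_abs]; exact norm_inner_le_norm _ _
    _ ≤ ‖x'‖ * (specNorm E * ‖x'‖) := by
        gcongr; exact ContinuousLinearMap.le_opNorm _ _
    _ = specNorm E * ‖x'‖^2 := by ring

lemma key_traceineq {d : ℕ} (E Bm : Matrix (Fin d) (Fin d) ℝ)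
    (hE : Eᵀ = E) (hB : Bmᵀ = Bm) :
    |frobInner E Bm| ≤ specNorm E * (Real.sqrt (Bm.rank : ℝ) * frobNorm Bm) := by
  have hBh : Bm.IsHermitian := hB
  set U : Matrix (Fin d) (Fin d) ℝ := (Matrix.IsHermitian.eigenvectorUnitary hBh : Matrix (Fin d) (Fin d) ℝ) with hU
  set lam := hBh.eigenvalues with hlam
  have hCU : star U * U = 1 :=
    (Matrix.mem_unitaryGroup_iff').mp (Matrix.IsHermitian.eigenvectorUnitary hBh).2
  have hspec : Bm = U * Matrix.diagonal lam * star U := by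
    simpa using hBh.spectral_theorem
  have htr : frobInner E Bm = ∑ k, ((star U * E * U) k k) * lam k := by
    rw [frobInner, hE, hspec,
      show E * (U * Matrix.diagonal lam * star U) = (E * U * Matrix.diagonal lam) * star U by
        simp [Matrix.mul_assoc],
      Matrix.trace_mul_comm, ← Matrix.mul_assoc, ← Matrix.mul_assoc, Matrix.trace]
    congr 1; ext k
    simp [Matrix.diag, Matrix.mul_diagonal]
  have hdiag : ∀ k, (star U * E * U) k k = (fun i => U i k) ⬝ᵥ (E *ᵥ fun i => U i k) := by
    intro k
    simp only [Matrix.mul_apply, dotProduct, Matrix.mulVec, Matrix.star_apply, star_trivial,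
      Finset.sum_mul, Finset.mul_sum]
    rw [Finset.sum_comm]
    refine Finset.sum_congr rfl fun i _ => Finset.sum_congr rfl fun j _ => by ring
  have hcol : ∀ k, ∑ i, (U i k)^2 = 1 := by
    intro k
    have := congrFun (congrFun hCU k) k
    simp only [Matrix.mul_apply, Matrix.star_apply, star_trivial, Matrix.one_apply_eq] at this
    simpa [sq] using this
  have hquad : ∀ k, |(star U * E * U) k k| ≤ specNorm E := by
    intro k
    rw [hdiag k]
    simpa [hcol k] using quad_le E (fun i => U i k)
  set s : Finset (Fin d) := Finset.univ.filter (fun k => lam k ≠ 0) with hs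
  have hrank : (Bm.rank : ℝ) = (s.card : ℝ) := by
    rw [hBh.rank_eq_card_non_zero_eigs]
    norm_cast
    simp [hs, Fintype.card_subtype]
    rfl
  have hfrob2 : frobInner Bm Bm = ∑ k, lam k ^ 2 := by
    rw [frobInner, hB]
    have hBB : Bm * Bm = U * Matrix.diagonal (fun k => lam k * lam k) * star U := by
      rw [hspec]
      rw [show U * Matrix.diagonal lam * star U * (U * Matrix.diagonal lam * star U)
          = U * Matrix.diagonal lam * (star U * U) * Matrix.diagonal lam * star U by
        simp [Matrix.mul_assoc]]
      rw [hCU]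
      simp [Matrix.mul_assoc, Matrix.diagonal_mul_diagonal]
    rw [hBB, Matrix.trace_mul_comm, ← Matrix.mul_assoc, hCU]
    simp [sq, Matrix.trace_diagonal]
  have hfrob : frobNorm Bm = Real.sqrt (∑ k, lam k ^ 2) := by rw [frobNorm, hfrob2]
  have hsum : ∑ k ∈ s, |lam k| ≤ Real.sqrt (s.card : ℝ) * Real.sqrt (∑ k, lam k ^2) := by
    calc ∑ k ∈ s, |lam k| = Real.sqrt ((∑ k ∈ s, |lam k|)^2) :=
          (Real.sqrt_sq (by positivity)).symm
      _ ≤ Real.sqrt ((s.card : ℝ) * ∑ k ∈ s, lam k ^ 2) := by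
          apply Real.sqrt_le_sqrt
          simpa [sq_abs] using sq_sum_le_card_mul_sum_sq (s := s) (f := fun k => |lam k|)
      _ ≤ Real.sqrt ((s.card : ℝ) * ∑ k, lam k ^ 2) := by
          apply Real.sqrt_le_sqrt
          exact mul_le_mul_of_nonneg_left
            (Finset.sum_le_sum_of_subset_of_nonneg s.subset_univ fun i _ _ => sq_nonneg _)
            (Nat.cast_nonneg _)
      _ = _ := Real.sqrt_mul (Nat.cast_nonneg _) _
  calc |frobInner E Bm| = |∑ k, ((star U * E * U) k k) * lam k| := by rw [htr]
    _ = |∑ k ∈ s, ((star U * E * U) k k) * lam k| := by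
        congr 1
        refine (Finset.sum_subset s.subset_univ ?_).symm
        intro k _ hk
        simp only [hs, Finset.mem_filter, Finset.mem_univ, true_and, not_not] at hk
        simp [hk]
    _ ≤ ∑ k ∈ s, |((star U * E * U) k k) * lam k| := Finset.abs_sum_le_sum_abs _ _
    _ ≤ ∑ k ∈ s, specNorm E * |lam k| := by
        refine Finset.sum_le_sum fun k _ => ?_
        rw [abs_mul]
        exact mul_le_mul_of_nonneg_right (hquad k) (abs_nonneg _)
    _ = specNorm E * ∑ k ∈ s, |lam k| := by rw [Finset.mul_sum]
    _ ≤ specNorm E * (Real.sqrt (s.card : ℝ) * Real.sqrt (∑ k, lam k ^2)) :=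
        mul_le_mul_of_nonneg_left hsum (specNorm_nonneg E)
    _ = specNorm E * (Real.sqrt (Bm.rank : ℝ) * frobNorm Bm) := by rw [hrank, hfrob]

/-- basic inequality for the penalized estimator (Lemma on the risk
upper bound). -/
theorem stmt_6 {d p n : ℕ} (hp : 0 < p) (hn : 0 < n) (M₁ : ℝ)
    (B : Fin p → Matrix (Fin d) (Fin d) ℝ) (hBsymm : ∀ j, (B j)ᵀ = B j)
    (hBF : ∀ j, frobNorm (B j) ≤ M₁)
    (u : ℝ) (hu : u = Finset.univ.sup' (Finset.univ_nonempty_iff.mpr ⟨⟨0, hp⟩⟩)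
      (fun j => Real.sqrt ((B j).rank : ℝ)))
    (θstar : Fin p → ℝ)
    (ε : Fin n → Matrix (Fin d) (Fin d) ℝ) (hεsymm : ∀ i, (ε i)ᵀ = ε i)
    (Z : Fin n → Matrix (Fin d) (Fin d) ℝ) (hZ : ∀ i, Z i = Gamma B θstar + ε i)
    (lam : ℝ) (hlam : 0 < lam)
    (θhat : Fin p → ℝ) (hθhat : ∀ θ, objective B Z lam θhat ≤ objective B Z lam θ) :
    frobNorm (Gamma B θhat - Gamma B θstar) ^ 2
      ≤ (2 * u * M₁ / n) * specNorm (∑ i, ε i) * (∑ j, |θstar j - θhat j|)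
        + (2 * lam / n) * ((∑ j, |θstar j|) - ∑ j, |θhat j|) := by
  set Δ := Gamma B θhat - Gamma B θstar with hΔ
  set E := ∑ i, ε i with hE
  have hn' : (0:ℝ) < n := by exact_mod_cast hn
  -- symmetry of E
  have hEsym : Eᵀ = E := by
    rw [hE, Matrix.transpose_sum]
    exact Finset.sum_congr rfl fun i _ => hεsymm i
  -- nonnegativity facts
  have hu0 : 0 ≤ u := by
    rw [hu]
    exact le_trans (Real.sqrt_nonneg ((((B ⟨0, hp⟩).rank : ℝ))))
      (Finset.le_sup' (f := fun j => Real.sqrt (((B j).rank : ℝ))) (Finset.mem_univ (⟨0, hp⟩ : Fin p)))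
  have hM0 : 0 ≤ M₁ := le_trans (frobNorm_nonneg (B ⟨0, hp⟩)) (hBF ⟨0, hp⟩)
  -- basic inequality
  have hbasic : (n:ℝ) * frobInner Δ Δ
      ≤ 2 * frobInner E Δ + 2 * lam * ((∑ j, |θstar j|) - ∑ j, |θhat j|) := by
    have h := hθhat θstar
    rw [objective, objective, empRisk, empRisk] at h
    have h1 : ∀ i, Z i - Gamma B θstar = ε i := fun i => by rw [hZ i]; abel
    have h2 : ∀ i, Z i - Gamma B θhat = ε i - Δ := fun i => by rw [hZ i, hΔ]; abel
    have hexp : ∀ X Y : Matrix (Fin d) (Fin d) ℝ, frobNorm (X - Y) ^ 2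
        = frobInner X X - 2 * frobInner X Y + frobInner Y Y := by
      intro X Y
      rw [frobNorm_sq, frobInner_sub_left, frobInner_sub_right, frobInner_sub_right,
        frobInner_comm Y X]
      ring
    have h3 : ∀ i, frobNorm (Z i - Gamma B θhat) ^ 2
        = frobInner (ε i) (ε i) - 2 * frobInner (ε i) Δ + frobInner Δ Δ := by
      intro i
      rw [h2 i, hexp]
    have h4 : ∀ i, frobNorm (Z i - Gamma B θstar) ^ 2 = frobInner (ε i) (ε i) := by
      intro i; rw [h1 i, frobNorm_sq]
    simp only [h3, h4] at h
    rw [Finset.sum_add_distrib, Finset.sum_sub_distrib, Finset.sum_const,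
      Finset.card_univ, Fintype.card_fin, nsmul_eq_mul] at h
    have h5 : ∑ i, 2 * frobInner (ε i) Δ = 2 * frobInner E Δ := by
      rw [hE, frobInner_sum_left, Finset.mul_sum]
    rw [h5] at h
    linarith
  -- bound on the cross term
  have hcross : frobInner E Δ ≤ specNorm E * (u * M₁) * (∑ j, |θstar j - θhat j|) := by
    have hΔsum : Δ = ∑ j, (θhat j - θstar j) • B j := by
      rw [hΔ, Gamma, Gamma, ← Finset.sum_sub_distrib]
      exact Finset.sum_congr rfl fun j _ => by rw [sub_smul]
    rw [hΔsum, frobInner_sum_right]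
    rw [Finset.mul_sum]
    refine Finset.sum_le_sum fun j _ => ?_
    rw [frobInner_smul_right]
    have hkey : |frobInner E (B j)| ≤ specNorm E * (u * M₁) := by
      refine le_trans (key_traceineq E (B j) hEsym (hBsymm j)) ?_
      refine mul_le_mul_of_nonneg_left ?_ (specNorm_nonneg E)
      refine mul_le_mul ?_ (hBF j) (frobNorm_nonneg _) hu0
      rw [hu]
      exact Finset.le_sup' (f := fun j => Real.sqrt (((B j).rank : ℝ))) (Finset.mem_univ j)
    calc (θhat j - θstar j) * frobInner E (B j)
        ≤ |(θhat j - θstar j) * frobInner E (B j)| := le_abs_self _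
      _ = |θstar j - θhat j| * |frobInner E (B j)| := by
          rw [abs_mul, abs_sub_comm]
      _ ≤ |θstar j - θhat j| * (specNorm E * (u * M₁)) :=
          mul_le_mul_of_nonneg_left hkey (abs_nonneg _)
      _ = specNorm E * (u * M₁) * |θstar j - θhat j| := by ring
  -- conclude
  have hfinal : (n:ℝ) * (frobNorm Δ ^ 2)
      ≤ 2 * u * M₁ * specNorm E * (∑ j, |θstar j - θhat j|)
        + 2 * lam * ((∑ j, |θstar j|) - ∑ j, |θhat j|) := by
    rw [frobNorm_sq]
    calc (n:ℝ) * frobInner Δ Δ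
        ≤ 2 * frobInner E Δ + 2 * lam * ((∑ j, |θstar j|) - ∑ j, |θhat j|) := hbasic
      _ ≤ 2 * (specNorm E * (u * M₁) * (∑ j, |θstar j - θhat j|))
          + 2 * lam * ((∑ j, |θstar j|) - ∑ j, |θhat j|) := by linarith
      _ = 2 * u * M₁ * specNorm E * (∑ j, |θstar j - θhat j|)
          + 2 * lam * ((∑ j, |θstar j|) - ∑ j, |θhat j|) := by ring
  rw [show (2 * u * M₁ / n) * specNorm E * (∑ j, |θstar j - θhat j|)
        + (2 * lam / n) * ((∑ j, |θstar j|) - ∑ j, |θhat j|)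
      = (2 * u * M₁ * specNorm E * (∑ j, |θstar j - θhat j|)
        + 2 * lam * ((∑ j, |θstar j|) - ∑ j, |θhat j|)) / n by field_simp]
  rw [le_div_iff₀ hn']
  linarith
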